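/- EDPD with strongly convex primal: if f is μ_f-strongly convex (μ_f > 0, g merely convex), with τ_t = (t+1)τ, τ ≤ μ_f/(2‖A‖²), η_t = 1/(τ_t‖A‖²), α_{t+1} = (t+2)/(t+3), y_0 = y_1, the weighted averages x̃_{k+1} = ∑_{t=1}^k (t+2)x_{t+1}/∑_{t=1}^k(t+2) and similarly ỹ_{k+1} satisfy L(x̃_{k+1}, y) − L(x, ỹ_{k+1}) ≤ (1/(k(k+5)))(6τ‖A‖²‖x − x_1‖² + (3/(2τ))‖y − y_1‖²) for all (x,y). -/

import Mathlib

open scoped RealInnerProductSpace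

private lemma aux_pos (B C : ℝ) (h : ∀ l : ℝ, 0 < l → l ≤ 1 → 0 ≤ B + l * C) : 0 ≤ B := by
  by_contra hB
  push_neg at hB
  rcases le_or_gt C 0 with hC | hC
  · have h1 := h 1 one_pos le_rfl; linarith
  · have hC0 : C ≠ 0 := ne_of_gt hC
    rcases le_or_gt (-B/(2*C)) 1 with h1 | h1
    · have hl : 0 < -B/(2*C) := div_pos (by linarith) (by linarith)
      have h2 := h _ hl h1
      have h3 : (-B/(2*C)) * C = -B/2 := by field_simp
      linarith
    · have h2 := h 1 one_pos le_rfl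
      have h3 : 1*(2*C) < -B := (lt_div_iff₀ (by linarith)).mp h1
      linarith

private lemma aux_pos' (B C : ℝ) (h : ∀ l : ℝ, 0 < l → l ≤ 1 → 0 ≤ l * (B + l * C)) :
    0 ≤ B := by
  apply aux_pos B C
  intro l hl0 hl1
  have h1 := h l hl0 hl1
  by_contra hcon
  push_neg at hcon
  have h3 := mul_pos hl0 (neg_pos.mpr hcon)
  nlinarith [h1]

set_option maxHeartbeats 4000000 in
theorem stmt17 {E F : Type*} [NormedAddCommGroup E] [InnerProductSpace ℝ E]
    [NormedAddCommGroup F] [InnerProductSpace ℝ F]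
    (f : E → ℝ) (g : F → ℝ) (A : E →L[ℝ] F)
    (μf τ : ℝ) (hμf : 0 < μf) (hτ0 : 0 < τ) (hτ : τ ≤ μf / (2 * ‖A‖ ^ 2))
    (hf : StrongConvexOn Set.univ μf f)
    (hg : ConvexOn ℝ Set.univ g)
    (τt η α : ℕ → ℝ)
    (hτt : ∀ t, τt t = ((t : ℝ) + 1) * τ)
    (hη : ∀ t, η t = 1 / (τt t * ‖A‖ ^ 2))
    (hα : ∀ t, α t = ((t : ℝ) + 1) / ((t : ℝ) + 2))
    (x : ℕ → E) (y yh : ℕ → F)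
    (hy0 : y 0 = y 1)
    (hyh : ∀ t ≥ 1, yh t = α t • (y t - y (t - 1)) + y t)
    (hx : ∀ t ≥ 1, ∀ z,
      f (x (t + 1)) + ⟪A (x (t + 1)), yh t⟫ + ‖x (t + 1) - x t‖ ^ 2 / (2 * η t) ≤
      f z + ⟪A z, yh t⟫ + ‖z - x t‖ ^ 2 / (2 * η t))
    (hy : ∀ t ≥ 1, ∀ z,
      ‖y (t + 1) - (y t + τt t • A (x (t + 1)))‖ ^ 2 / (2 * τt t) + g (y (t + 1)) ≤
      ‖z - (y t + τt t • A (x (t + 1)))‖ ^ 2 / (2 * τt t) + g z)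
    (L : E → F → ℝ) (hL : ∀ u v, L u v = f u + ⟪A u, v⟫ - g v) :
    ∀ k : ℕ, 1 ≤ k → ∀ (xx : E) (yy : F),
      L ((∑ t ∈ Finset.Icc 1 k, ((t : ℝ) + 2))⁻¹ •
            ∑ t ∈ Finset.Icc 1 k, ((t : ℝ) + 2) • x (t + 1)) yy
        - L xx ((∑ t ∈ Finset.Icc 1 k, ((t : ℝ) + 2))⁻¹ •
            ∑ t ∈ Finset.Icc 1 k, ((t : ℝ) + 2) • y (t + 1)) ≤
        1 / ((k : ℝ) * (k + 5)) *
          (6 * τ * ‖A‖ ^ 2 * ‖xx - x 1‖ ^ 2 + 3 / (2 * τ) * ‖yy - y 1‖ ^ 2) := by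
  -- basic facts
  have hNpos : 0 < ‖A‖ ^ 2 := by
    rcases (sq_nonneg ‖A‖).lt_or_eq with h | h
    · exact h
    · exfalso; rw [← h] at hτ; simp at hτ; linarith
  have hμτ : 2 * τ * ‖A‖ ^ 2 ≤ μf := by
    have := (le_div_iff₀ (by positivity : (0:ℝ) < 2 * ‖A‖ ^ 2)).mp hτ
    linarith
  have hcs : ∀ (d : E) (δ : F), |⟪A d, δ⟫| ≤ ‖A‖ * ‖d‖ * ‖δ‖ := by
    intro d δ
    refine (abs_real_inner_le_norm _ _).trans ?_
    exact mul_le_mul_of_nonneg_right (A.le_opNorm d) (norm_nonneg δ)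
  -- primal first order condition
  have hPfoc : ∀ t, 1 ≤ t → ∀ z : E,
      μf/2 * ‖z - x (t+1)‖^2 ≤ f z - f (x (t+1)) + ⟪A z, yh t⟫ - ⟪A (x (t+1)), yh t⟫
        + (τt t * ‖A‖^2) * ⟪x (t+1) - x t, z - x (t+1)⟫ := by
    intro t ht z
    have hτp : 0 < τt t := by rw [hτt]; positivity
    have hDp : 0 < τt t * ‖A‖^2 := mul_pos hτp hNpos
    have hDne : τt t * ‖A‖^2 ≠ 0 := ne_of_gt hDp
    have hmain : 0 ≤ f z - f (x (t+1)) + ⟪A z, yh t⟫ - ⟪A (x (t+1)), yh t⟫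
        + (τt t * ‖A‖^2) * ⟪x (t+1) - x t, z - x (t+1)⟫ - μf/2 * ‖z - x (t+1)‖^2 := by
      apply aux_pos' _ ((μf/2) * ‖z - x (t+1)‖^2 + (τt t * ‖A‖^2)/2 * ‖z - x (t+1)‖^2)
      intro l hl0 hl1
      have hmin := hx t ht ((1-l) • x (t+1) + l • z)
      have hcvx := hf.2 (Set.mem_univ (x (t+1))) (Set.mem_univ z)
        (by linarith : (0:ℝ) ≤ 1 - l) hl0.le (by ring)
      simp only [smul_eq_mul] at hcvx
      rw [norm_sub_rev (x (t+1)) z] at hcvx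
      have hfrac : ∀ a : ℝ, a / (2 * η t) = a * (τt t * ‖A‖^2) / 2 := by
        intro a; rw [hη t]; field_simp
      have hcomb : (1-l) • x (t+1) + l • z - x t = (x (t+1) - x t) + l • (z - x (t+1)) := by
        rw [sub_smul, one_smul, smul_sub]; abel
      have hexp : ‖(1-l) • x (t+1) + l • z - x t‖^2
          = ‖x (t+1) - x t‖^2 + 2*(l*⟪x (t+1) - x t, z - x (t+1)⟫) + l^2*‖z - x (t+1)‖^2 := by
        rw [hcomb, norm_add_sq_real, real_inner_smul_right, norm_smul]
        simp only [Real.norm_eq_abs, mul_pow, sq_abs]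
        try ring
      have hlin : ⟪A ((1-l) • x (t+1) + l • z), yh t⟫
          = (1-l) * ⟪A (x (t+1)), yh t⟫ + l * ⟪A z, yh t⟫ := by
        rw [map_add, map_smul, map_smul, inner_add_left, real_inner_smul_left,
          real_inner_smul_left]
      rw [hexp, hfrac, hfrac, hlin] at hmin
      have hEq : l * ((f z - f (x (t+1)) + ⟪A z, yh t⟫ - ⟪A (x (t+1)), yh t⟫
            + (τt t * ‖A‖^2) * ⟪x (t+1) - x t, z - x (t+1)⟫ - μf/2 * ‖z - x (t+1)‖^2)
            + l * ((μf/2) * ‖z - x (t+1)‖^2 + (τt t * ‖A‖^2)/2 * ‖z - x (t+1)‖^2))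
          = ((f ((1-l) • x (t+1) + l • z)
              + ((1-l) * ⟪A (x (t+1)), yh t⟫ + l * ⟪A z, yh t⟫)
              + (‖x (t+1) - x t‖^2 + 2*(l*⟪x (t+1) - x t, z - x (t+1)⟫)
                  + l^2*‖z - x (t+1)‖^2) * (τt t * ‖A‖^2) / 2)
            - (f (x (t+1)) + ⟪A (x (t+1)), yh t⟫
              + ‖x (t+1) - x t‖^2 * (τt t * ‖A‖^2) / 2))
          + (((1-l) * f (x (t+1)) + l * f z - (1-l)*l*(μf/2 * ‖z - x (t+1)‖^2))
            - f ((1-l) • x (t+1) + l • z)) := by ring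
      rw [hEq]
      linarith [hmin, hcvx]
    linarith [hmain]
  -- dual first order condition
  have hDfoc : ∀ t, 1 ≤ t → ∀ v : F,
      0 ≤ g v - g (y (t+1))
        + (1/(τt t)) * ⟪y (t+1) - (y t + τt t • A (x (t+1))), v - y (t+1)⟫ := by
    intro t ht v
    have hτp : 0 < τt t := by rw [hτt]; positivity
    have hτne : τt t ≠ 0 := ne_of_gt hτp
    apply aux_pos' _ ((1/(2*τt t)) * ‖v - y (t+1)‖^2)
    intro l hl0 hl1
    have hmin := hy t ht ((1-l) • y (t+1) + l • v)
    have hcvx := hg.2 (Set.mem_univ (y (t+1))) (Set.mem_univ v)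
      (by linarith : (0:ℝ) ≤ 1 - l) hl0.le (by ring)
    simp only [smul_eq_mul] at hcvx
    have hcomb : (1-l) • y (t+1) + l • v - (y t + τt t • A (x (t+1)))
        = (y (t+1) - (y t + τt t • A (x (t+1)))) + l • (v - y (t+1)) := by
      rw [sub_smul, one_smul, smul_sub]; abel
    have hexp : ‖(1-l) • y (t+1) + l • v - (y t + τt t • A (x (t+1)))‖^2
        = ‖y (t+1) - (y t + τt t • A (x (t+1)))‖^2
          + 2*(l*⟪y (t+1) - (y t + τt t • A (x (t+1))), v - y (t+1)⟫)
          + l^2*‖v - y (t+1)‖^2 := by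
      rw [hcomb, norm_add_sq_real, real_inner_smul_right, norm_smul]
      simp only [Real.norm_eq_abs, mul_pow, sq_abs]
      try ring
    rw [hexp] at hmin
    have hEq : l * ((g v - g (y (t+1))
          + (1/(τt t)) * ⟪y (t+1) - (y t + τt t • A (x (t+1))), v - y (t+1)⟫)
          + l * ((1/(2*τt t)) * ‖v - y (t+1)‖^2))
        = (((‖y (t+1) - (y t + τt t • A (x (t+1)))‖^2
              + 2*(l*⟪y (t+1) - (y t + τt t • A (x (t+1))), v - y (t+1)⟫)
              + l^2*‖v - y (t+1)‖^2) / (2*τt t) + g ((1-l) • y (t+1) + l • v))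
            - (‖y (t+1) - (y t + τt t • A (x (t+1)))‖^2 / (2*τt t) + g (y (t+1))))
          + (((1-l) * g (y (t+1)) + l * g v) - g ((1-l) • y (t+1) + l • v)) := by
      field_simp
      ring
    rw [hEq]
    linarith [hmin, hcvx]
  -- primal three point inequality
  have hP3 : ∀ t, 1 ≤ t → ∀ z : E,
      f (x (t+1)) + ⟪A (x (t+1)), yh t⟫
        + (τt t * ‖A‖^2/2) * (‖x (t+1) - x t‖^2 + ‖z - x (t+1)‖^2 - ‖z - x t‖^2)
        + μf/2 * ‖z - x (t+1)‖^2 ≤ f z + ⟪A z, yh t⟫ := by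
    intro t ht z
    have h := hPfoc t ht z
    have hid : ‖z - x t‖^2
        = ‖z - x (t+1)‖^2 + 2*⟪x (t+1) - x t, z - x (t+1)⟫ + ‖x (t+1) - x t‖^2 := by
      have e : z - x t = (z - x (t+1)) + (x (t+1) - x t) := by abel
      rw [e, norm_add_sq_real, real_inner_comm]
    rw [hid]
    nlinarith [h]
  -- dual three point inequality
  have hD3 : ∀ t, 1 ≤ t → ∀ v : F,
      ⟪A (x (t+1)), v⟫ - ⟪A (x (t+1)), y (t+1)⟫ - g v + g (y (t+1))
        + (1/(2*τt t)) * (‖y (t+1) - y t‖^2 + ‖v - y (t+1)‖^2 - ‖v - y t‖^2) ≤ 0 := by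
    intro t ht v
    have hτp : 0 < τt t := by rw [hτt]; positivity
    have hτne : τt t ≠ 0 := ne_of_gt hτp
    have h := hDfoc t ht v
    have e1 : y (t+1) - (y t + τt t • A (x (t+1)))
        = (y (t+1) - y t) - τt t • A (x (t+1)) := by abel
    rw [e1, inner_sub_left, real_inner_smul_left] at h
    have e4 : (1/(τt t)) * (⟪y (t+1) - y t, v - y (t+1)⟫
          - τt t * ⟪A (x (t+1)), v - y (t+1)⟫)
        = (1/(τt t)) * ⟪y (t+1) - y t, v - y (t+1)⟫ - ⟪A (x (t+1)), v - y (t+1)⟫ := by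
      field_simp
      try ring
    rw [e4] at h
    have e2 : ⟪A (x (t+1)), v - y (t+1)⟫ = ⟪A (x (t+1)), v⟫ - ⟪A (x (t+1)), y (t+1)⟫ :=
      inner_sub_right _ _ _
    rw [e2] at h
    have e3 : ‖v - y t‖^2
        = ‖v - y (t+1)‖^2 + 2*⟪y (t+1) - y t, v - y (t+1)⟫ + ‖y (t+1) - y t‖^2 := by
      have e : v - y t = (v - y (t+1)) + (y (t+1) - y t) := by abel
      rw [e, norm_add_sq_real, real_inner_comm]
    rw [e3]
    have e5 : (1/(2*τt t)) * (‖y (t+1) - y t‖^2 + ‖v - y (t+1)‖^2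
          - (‖v - y (t+1)‖^2 + 2*⟪y (t+1) - y t, v - y (t+1)⟫ + ‖y (t+1) - y t‖^2))
        = -((1/(τt t)) * ⟪y (t+1) - y t, v - y (t+1)⟫) := by
      field_simp
      ring
    rw [e5]
    linarith [h]
  -- Young inequality helper
  have hyoung : ∀ (j:ℕ) (p q : ℝ), 0 ≤ p → 0 ≤ q →
      ((j:ℝ)+2) * (‖A‖ * p * q) ≤
        ((j:ℝ)+2)*((j:ℝ)+3)*(τ*‖A‖^2)/2 * p^2 + ((j:ℝ)+3)/(2*((j:ℝ)+2)*τ) * q^2 := by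
    intro j p q hp hq
    have hj2 : (0:ℝ) < (j:ℝ)+2 := by positivity
    have hj2' : ((j:ℝ)+2) ≠ 0 := ne_of_gt hj2
    have hτne : τ ≠ 0 := ne_of_gt hτ0
    rw [← sub_nonneg]
    have hEq : ((j:ℝ)+2)*((j:ℝ)+3)*(τ*‖A‖^2)/2 * p^2 + ((j:ℝ)+3)/(2*((j:ℝ)+2)*τ) * q^2
          - ((j:ℝ)+2) * (‖A‖ * p * q)
        = (((j:ℝ)+3)*(((j:ℝ)+2)*τ*‖A‖*p - q)^2 + 2*((((j:ℝ)+2)*τ*‖A‖*p)*q))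
            / (2*((j:ℝ)+2)*τ) := by
      field_simp
      ring
    rw [hEq]
    apply div_nonneg _ (by positivity)
    have h2 : 0 ≤ (((j:ℝ)+2)*τ*‖A‖*p)*q :=
      mul_nonneg (mul_nonneg (mul_nonneg (mul_nonneg hj2.le hτ0.le) (norm_nonneg _)) hp) hq
    linarith [mul_nonneg (by positivity : (0:ℝ) ≤ (j:ℝ)+3)
      (sq_nonneg (((j:ℝ)+2)*τ*‖A‖*p - q)), h2]
  intro k hk xx yy
  -- the Lyapunov function
  set Φ : ℕ → ℝ := fun t =>
    ((t:ℝ)+2)*((t:ℝ)+3)*(τ*‖A‖^2)/2 * ‖xx - x (t+1)‖^2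
    + ((t:ℝ)+3)/(2*((t:ℝ)+2)*τ) * ‖yy - y (t+1)‖^2
    + ((t:ℝ)+3)/(2*((t:ℝ)+2)*τ) * ‖y (t+1) - y t‖^2
    - ((t:ℝ)+2) * ⟪A (x (t+1) - xx), y (t+1) - y t⟫ with hΦdef
  -- per-step Lyapunov descent
  have hstep : ∀ i : ℕ, ((i:ℝ)+3) * (L (x (i+2)) yy - L xx (y (i+2))) ≤ Φ i - Φ (i+1) := by
    intro i
    have ht1 : 1 ≤ i + 1 := Nat.le_add_left 1 i
    have hτv : τt (i+1) = ((i:ℝ)+2)*τ := by rw [hτt]; push_cast; ring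
    have hτ2 : 2*τt (i+1) = 2*((i:ℝ)+2)*τ := by rw [hτt]; push_cast; ring
    have hP := hP3 (i+1) ht1 xx
    have hD := hD3 (i+1) ht1 yy
    rw [hτv] at hP
    rw [hτ2] at hD
    simp only [show i+1+1 = i+2 from rfl] at hP hD
    have hyhe : yh (i+1) = α (i+1) • (y (i+1) - y i) + y (i+1) := by
      have h := hyh (i+1) ht1
      simpa using h
    have hα3 : ((i:ℝ)+3) * α (i+1) = (i:ℝ)+2 := by
      rw [hα]
      push_cast
      have h3 : ((i:ℝ)+1+2) ≠ 0 := by positivity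
      field_simp
      ring
    have i1 : ⟪A (x (i+2)), yh (i+1)⟫ - ⟪A xx, yh (i+1)⟫
        = ⟪A (x (i+2) - xx), yh (i+1)⟫ := by rw [map_sub, inner_sub_left]
    have i2 : ⟪A (x (i+2) - xx), yh (i+1)⟫
        = α (i+1) * ⟪A (x (i+2) - xx), y (i+1) - y i⟫ + ⟪A (x (i+2) - xx), y (i+1)⟫ := by
      rw [hyhe, inner_add_right, real_inner_smul_right]
    have iAll : ((i:ℝ)+3)*⟪A (x (i+2)), yh (i+1)⟫ - ((i:ℝ)+3)*⟪A xx, yh (i+1)⟫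
        = ((i:ℝ)+2)*⟪A (x (i+2) - xx), y (i+1) - y i⟫
          + ((i:ℝ)+3)*⟪A (x (i+2) - xx), y (i+1)⟫ := by
      linear_combination ((i:ℝ)+3)*i1 + ((i:ℝ)+3)*i2
        + ⟪A (x (i+2) - xx), y (i+1) - y i⟫ * hα3
    have i3' : ⟪A (x (i+2) - xx), y (i+2) - y (i+1)⟫ + ⟪A (x (i+2) - xx), y (i+1)⟫
        = ⟪A (x (i+2)), y (i+2)⟫ - ⟪A xx, y (i+2)⟫ := by
      have e : (y (i+2) - y (i+1)) + y (i+1) = y (i+2) := by abel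
      rw [← inner_add_right, e, map_sub, inner_sub_left]
    have i3s : ((i:ℝ)+3)*⟪A (x (i+2) - xx), y (i+2) - y (i+1)⟫
          + ((i:ℝ)+3)*⟪A (x (i+2) - xx), y (i+1)⟫
        = ((i:ℝ)+3)*⟪A (x (i+2)), y (i+2)⟫ - ((i:ℝ)+3)*⟪A xx, y (i+2)⟫ := by
      linear_combination ((i:ℝ)+3) * i3'
    have t1 := mul_le_mul_of_nonneg_left hP (by positivity : (0:ℝ) ≤ (i:ℝ)+3)
    have t2 := mul_le_mul_of_nonneg_left hD (by positivity : (0:ℝ) ≤ (i:ℝ)+3)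
    have key1 : ((i:ℝ)+3) * (L (x (i+2)) yy - L xx (y (i+2))) ≤
        ((i:ℝ)+3)*⟪A (x (i+2) - xx), y (i+2) - y (i+1)⟫
        - ((i:ℝ)+2)*⟪A (x (i+2) - xx), y (i+1) - y i⟫
        - ((i:ℝ)+3)*(((((i:ℝ)+2)*τ) * ‖A‖^2/2) * (‖x (i+2) - x (i+1)‖^2
            + ‖xx - x (i+2)‖^2 - ‖xx - x (i+1)‖^2) + μf/2 * ‖xx - x (i+2)‖^2)
        - ((i:ℝ)+3)*((1/(2*((i:ℝ)+2)*τ)) * (‖y (i+2) - y (i+1)‖^2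
            + ‖yy - y (i+2)‖^2 - ‖yy - y (i+1)‖^2)) := by
      rw [hL, hL]
      nlinarith [t1, t2, iAll, i3s]
    have hΦi : Φ i = ((i:ℝ)+2)*((i:ℝ)+3)*(τ*‖A‖^2)/2 * ‖xx - x (i+1)‖^2
        + ((i:ℝ)+3)/(2*((i:ℝ)+2)*τ) * ‖yy - y (i+1)‖^2
        + ((i:ℝ)+3)/(2*((i:ℝ)+2)*τ) * ‖y (i+1) - y i‖^2
        - ((i:ℝ)+2)*⟪A (x (i+1) - xx), y (i+1) - y i⟫ := by
      simp only [hΦdef]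
    have hΦi1 : Φ (i+1) = ((i:ℝ)+3)*((i:ℝ)+4)*(τ*‖A‖^2)/2 * ‖xx - x (i+2)‖^2
        + ((i:ℝ)+4)/(2*((i:ℝ)+3)*τ) * ‖yy - y (i+2)‖^2
        + ((i:ℝ)+4)/(2*((i:ℝ)+3)*τ) * ‖y (i+2) - y (i+1)‖^2
        - ((i:ℝ)+3)*⟪A (x (i+2) - xx), y (i+2) - y (i+1)⟫ := by
      simp only [hΦdef, show i+1+1 = i+2 from rfl]
      push_cast
      ring
    have i6 : ⟪A (x (i+2) - xx), y (i+1) - y i⟫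
        = ⟪A (x (i+2) - x (i+1)), y (i+1) - y i⟫ + ⟪A (x (i+1) - xx), y (i+1) - y i⟫ := by
      have e : x (i+2) - xx = (x (i+2) - x (i+1)) + (x (i+1) - xx) := by abel
      rw [e, map_add, inner_add_left]
    have i6m : ((i:ℝ)+2)*⟪A (x (i+2) - xx), y (i+1) - y i⟫
        = ((i:ℝ)+2)*⟪A (x (i+2) - x (i+1)), y (i+1) - y i⟫
          + ((i:ℝ)+2)*⟪A (x (i+1) - xx), y (i+1) - y i⟫ := by
      linear_combination ((i:ℝ)+2) * i6
    have hc := hcs (x (i+2) - x (i+1)) (y (i+1) - y i)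
    have hcm : -(((i:ℝ)+2)*(‖A‖ * ‖x (i+2) - x (i+1)‖ * ‖y (i+1) - y i‖))
        ≤ ((i:ℝ)+2)*⟪A (x (i+2) - x (i+1)), y (i+1) - y i⟫ := by
      have h2 := mul_le_mul_of_nonneg_left (abs_le.mp hc).1 (by positivity : (0:ℝ) ≤ (i:ℝ)+2)
      linarith [h2]
    have hyg := hyoung i ‖x (i+2) - x (i+1)‖ ‖y (i+1) - y i‖ (norm_nonneg _) (norm_nonneg _)
    have s1 : 0 ≤ ((i:ℝ)+3)*(μf/2 - τ*‖A‖^2)*‖xx - x (i+2)‖^2 :=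
      mul_nonneg (mul_nonneg (by positivity) (by linarith)) (sq_nonneg _)
    have hβm : ((i:ℝ)+4)/(2*((i:ℝ)+3)*τ) ≤ ((i:ℝ)+3)/(2*((i:ℝ)+2)*τ) := by
      rw [div_le_div_iff₀ (by positivity) (by positivity)]
      nlinarith [Nat.cast_nonneg (α := ℝ) i, hτ0]
    have s2a : ((i:ℝ)+4)/(2*((i:ℝ)+3)*τ) * ‖yy - y (i+2)‖^2
        ≤ ((i:ℝ)+3)/(2*((i:ℝ)+2)*τ) * ‖yy - y (i+2)‖^2 :=
      mul_le_mul_of_nonneg_right hβm (sq_nonneg _)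
    have s2b : ((i:ℝ)+4)/(2*((i:ℝ)+3)*τ) * ‖y (i+2) - y (i+1)‖^2
        ≤ ((i:ℝ)+3)/(2*((i:ℝ)+2)*τ) * ‖y (i+2) - y (i+1)‖^2 :=
      mul_le_mul_of_nonneg_right hβm (sq_nonneg _)
    have e1 : ((i:ℝ)+3)*((1/(2*((i:ℝ)+2)*τ)) * (‖y (i+2) - y (i+1)‖^2
          + ‖yy - y (i+2)‖^2 - ‖yy - y (i+1)‖^2))
        = ((i:ℝ)+3)/(2*((i:ℝ)+2)*τ)*‖y (i+2) - y (i+1)‖^2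
          + ((i:ℝ)+3)/(2*((i:ℝ)+2)*τ)*‖yy - y (i+2)‖^2
          - ((i:ℝ)+3)/(2*((i:ℝ)+2)*τ)*‖yy - y (i+1)‖^2 := by ring
    rw [hΦi, hΦi1]
    refine key1.trans ?_
    linarith [i6m, hcm, hyg, s1, s2a, s2b, e1]
  -- nonnegativity of Φ k
  have hΦk : 0 ≤ Φ k := by
    have hc := hcs (x (k+1) - xx) (y (k+1) - y k)
    have hcm : ((k:ℝ)+2)*⟪A (x (k+1) - xx), y (k+1) - y k⟫
        ≤ ((k:ℝ)+2)*(‖A‖ * ‖x (k+1) - xx‖ * ‖y (k+1) - y k‖) :=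
      mul_le_mul_of_nonneg_left (abs_le.mp hc).2 (by positivity : (0:ℝ) ≤ (k:ℝ)+2)
    have hyg := hyoung k ‖x (k+1) - xx‖ ‖y (k+1) - y k‖ (norm_nonneg _) (norm_nonneg _)
    have hn : ‖xx - x (k+1)‖ = ‖x (k+1) - xx‖ := norm_sub_rev _ _
    have hpos : 0 ≤ ((k:ℝ)+3)/(2*((k:ℝ)+2)*τ) * ‖yy - y (k+1)‖^2 := by positivity
    simp only [hΦdef]
    rw [hn]
    nlinarith [hcm, hyg, hpos]
  -- sum the per-step inequalities
  have hsum : ∑ t ∈ Finset.Icc 1 k, (((t:ℝ)+2) * (L (x (t+1)) yy - L xx (y (t+1))))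
      ≤ Φ 0 - Φ k := by
    rw [← Finset.Ico_add_one_right_eq_Icc, Finset.sum_Ico_eq_sum_range]
    try simp only [Nat.add_sub_cancel]
    refine le_trans (Finset.sum_le_sum (fun i _ => ?_))
      (le_of_eq (Finset.sum_range_sub' Φ k))
    have h := hstep i
    have e1 : 1 + i + 1 = i + 2 := by omega
    rw [e1]
    push_cast
    linarith [h]
  have hΦ0 : Φ 0 = 3*τ*‖A‖^2*‖xx - x 1‖^2 + 3/(4*τ)*‖yy - y 1‖^2 := by
    have h10 : y 1 - y 0 = 0 := by rw [hy0, sub_self]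
    simp only [hΦdef, Nat.cast_zero, zero_add, h10, norm_zero, inner_zero_right,
      mul_zero, sub_zero]
    ring
  -- weighted averaging
  set W := ∑ t ∈ Finset.Icc 1 k, ((t:ℝ)+2) with hWdef
  have hWsum : ∀ m : ℕ, (∑ t ∈ Finset.Icc 1 m, ((t:ℝ)+2)) = (m:ℝ)*((m:ℝ)+5)/2 := by
    intro m
    induction m with
    | zero => simp
    | succ n ih =>
      rw [Finset.sum_Icc_succ_top (Nat.le_add_left 1 n), ih]
      push_cast
      ring
  have hWval : W = (k:ℝ)*((k:ℝ)+5)/2 := by rw [hWdef]; exact hWsum k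
  have hk1 : (1:ℝ) ≤ (k:ℝ) := by exact_mod_cast hk
  have hWpos : 0 < W := by rw [hWval]; nlinarith
  have hρ0 : ∀ t ∈ Finset.Icc 1 k, 0 ≤ ((t:ℝ)+2)/W := fun t _ =>
    div_nonneg (by positivity) hWpos.le
  have hρ1 : ∑ t ∈ Finset.Icc 1 k, ((t:ℝ)+2)/W = 1 := by
    rw [← Finset.sum_div, ← hWdef]
    exact div_self hWpos.ne'
  have hfconv : ConvexOn ℝ Set.univ f := by
    refine ⟨convex_univ, fun a _ b _ p q hp hq hpq => ?_⟩
    have h := hf.2 (Set.mem_univ a) (Set.mem_univ b) hp hq hpq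
    simp only [smul_eq_mul] at h ⊢
    nlinarith [h, mul_nonneg (mul_nonneg hp hq)
      (mul_nonneg (by positivity : (0:ℝ) ≤ μf/2) (sq_nonneg ‖a - b‖))]
  have hxt : W⁻¹ • (∑ t ∈ Finset.Icc 1 k, ((t:ℝ)+2) • x (t+1))
      = ∑ t ∈ Finset.Icc 1 k, (((t:ℝ)+2)/W) • x (t+1) := by
    rw [Finset.smul_sum]
    refine Finset.sum_congr rfl fun t _ => ?_
    rw [smul_smul, div_eq_mul_inv, mul_comm]
  have hyt : W⁻¹ • (∑ t ∈ Finset.Icc 1 k, ((t:ℝ)+2) • y (t+1))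
      = ∑ t ∈ Finset.Icc 1 k, (((t:ℝ)+2)/W) • y (t+1) := by
    rw [Finset.smul_sum]
    refine Finset.sum_congr rfl fun t _ => ?_
    rw [smul_smul, div_eq_mul_inv, mul_comm]
  have hjf := hfconv.map_sum_le hρ0 hρ1 (fun t _ => Set.mem_univ (x (t+1)))
  have hjg := hg.map_sum_le hρ0 hρ1 (fun t _ => Set.mem_univ (y (t+1)))
  simp only [smul_eq_mul] at hjf hjg
  have hAx : ⟪A (∑ t ∈ Finset.Icc 1 k, (((t:ℝ)+2)/W) • x (t+1)), yy⟫
      = ∑ t ∈ Finset.Icc 1 k, (((t:ℝ)+2)/W) * ⟪A (x (t+1)), yy⟫ := by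
    rw [map_sum, sum_inner]
    refine Finset.sum_congr rfl fun t _ => ?_
    rw [map_smul, real_inner_smul_left]
  have hAy : ⟪A xx, ∑ t ∈ Finset.Icc 1 k, (((t:ℝ)+2)/W) • y (t+1)⟫
      = ∑ t ∈ Finset.Icc 1 k, (((t:ℝ)+2)/W) * ⟪A xx, y (t+1)⟫ := by
    rw [inner_sum]
    refine Finset.sum_congr rfl fun t _ => ?_
    rw [real_inner_smul_right]
  have hSeq : W⁻¹ * (∑ t ∈ Finset.Icc 1 k, (((t:ℝ)+2) * (L (x (t+1)) yy - L xx (y (t+1)))))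
      = ∑ t ∈ Finset.Icc 1 k, (((t:ℝ)+2)/W) * (L (x (t+1)) yy - L xx (y (t+1))) := by
    rw [Finset.mul_sum]
    refine Finset.sum_congr rfl fun t _ => ?_
    rw [div_eq_mul_inv]; ring
  have hSsplit : ∑ t ∈ Finset.Icc 1 k, (((t:ℝ)+2)/W) * (L (x (t+1)) yy - L xx (y (t+1)))
      = (∑ t ∈ Finset.Icc 1 k, (((t:ℝ)+2)/W) * f (x (t+1)))
        + (∑ t ∈ Finset.Icc 1 k, (((t:ℝ)+2)/W) * ⟪A (x (t+1)), yy⟫)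
        + (∑ t ∈ Finset.Icc 1 k, (((t:ℝ)+2)/W) * g (y (t+1)))
        - g yy - f xx
        - (∑ t ∈ Finset.Icc 1 k, (((t:ℝ)+2)/W) * ⟪A xx, y (t+1)⟫) := by
    have h1 : ∀ t ∈ Finset.Icc 1 k,
        (((t:ℝ)+2)/W) * (L (x (t+1)) yy - L xx (y (t+1)))
        = ((((t:ℝ)+2)/W) * f (x (t+1)) + (((t:ℝ)+2)/W) * ⟪A (x (t+1)), yy⟫
            + (((t:ℝ)+2)/W) * g (y (t+1)))
          - ((((t:ℝ)+2)/W) * g yy + (((t:ℝ)+2)/W) * f xx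
            + (((t:ℝ)+2)/W) * ⟪A xx, y (t+1)⟫) := by
      intro t _
      rw [hL, hL]; ring
    rw [Finset.sum_congr rfl h1, Finset.sum_sub_distrib, Finset.sum_add_distrib,
      Finset.sum_add_distrib, Finset.sum_add_distrib, Finset.sum_add_distrib,
      ← Finset.sum_mul, hρ1, ← Finset.sum_mul, hρ1]
    ring
  -- final assembly
  rw [hxt, hyt, hL, hL, hAx, hAy]
  have hb2 : (∑ t ∈ Finset.Icc 1 k, (((t:ℝ)+2)/W) * (L (x (t+1)) yy - L xx (y (t+1))))
      ≤ W⁻¹ * (Φ 0 - Φ k) := by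
    rw [← hSeq]
    exact mul_le_mul_of_nonneg_left hsum (inv_nonneg.mpr hWpos.le)
  have hfin : W⁻¹ * (Φ 0 - Φ k)
      ≤ 1 / ((k:ℝ) * ((k:ℝ) + 5)) *
          (6 * τ * ‖A‖ ^ 2 * ‖xx - x 1‖ ^ 2 + 3 / (2 * τ) * ‖yy - y 1‖ ^ 2) := by
    have hWinv : 0 ≤ W⁻¹ := inv_nonneg.mpr hWpos.le
    have h1 : W⁻¹ * (Φ 0 - Φ k) ≤ W⁻¹ * Φ 0 := by
      have h3 := mul_nonneg hWinv hΦk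
      nlinarith [h3]
    have hkp : (0:ℝ) < (k:ℝ)*((k:ℝ)+5) := by nlinarith
    have h2 : W⁻¹ * Φ 0 = 1 / ((k:ℝ) * ((k:ℝ) + 5)) *
        (6 * τ * ‖A‖ ^ 2 * ‖xx - x 1‖ ^ 2 + 3 / (2 * τ) * ‖yy - y 1‖ ^ 2) := by
      rw [hΦ0, hWval]
      field_simp
      ring
    linarith
  rw [hSsplit] at hb2
  linarith [hjf, hjg, hb2, hfin]
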